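/- Let A ∈ ℝ^{N×r} with N > r and rank(A) = r, let B ∈ ℝ^{N×n}, let U_A ∈ ℝ^{N×r} be an orthonormal basis for the column space of A, let X_opt = argmin_X ‖AX − B‖_F², let R² = ‖A X_opt − B‖_F², and let B^⊥ = B − U_A U_Aᵀ B. Suppose a matrix S ∈ ℝ^{s×N} satisfies (SC1) σ_min²(S U_A) ≥ 1/√2 and (SC2) ‖U_Aᵀ Sᵀ S B^⊥‖_F² ≤ ε R²/2 for some ε ∈ (0,1). Then the solution X̃_opt = argmin_X ‖S A X − S B‖_F² of the sketched problem satisfies ‖X_opt − X̃_opt‖_F² ≤ ε ‖A X_opt − B‖_F² / σ_min²(A). -/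

import Mathlib

open Matrix MeasureTheory

/-- Squared Frobenius norm of a real matrix. -/
noncomputable def frobSq {m n : Type*} [Fintype m] [Fintype n] (M : Matrix m n ℝ) : ℝ :=
  ∑ i, ∑ j, (M i j) ^ 2

/-- Square of the smallest singular value of a matrix, as the infimum of
squared norms `‖M x‖₂²` over unit vectors `x`. -/
noncomputable def sigmaMinSq {m n : Type*} [Fintype m] [Fintype n] (M : Matrix m n ℝ) : ℝ :=
  sInf {c : ℝ | ∃ x : n → ℝ, ∑ i, (x i) ^ 2 = 1 ∧ c = ∑ j, (M.mulVec x j) ^ 2}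

/-- Square of the largest singular value of a matrix. -/
noncomputable def sigmaMaxSq {m n : Type*} [Fintype m] [Fintype n] (M : Matrix m n ℝ) : ℝ :=
  sSup {c : ℝ | ∃ x : n → ℝ, ∑ i, (x i) ^ 2 = 1 ∧ c = ∑ j, (M.mulVec x j) ^ 2}

section Aux

variable {m n p q : Type*} [Fintype m] [Fintype n] [Fintype p] [Fintype q]

/-- Frobenius inner product. -/
noncomputable def fip (M N : Matrix m n ℝ) : ℝ := ∑ i, ∑ j, M i j * N i j

lemma frobSq_nonneg (M : Matrix m n ℝ) : 0 ≤ frobSq M := by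
  unfold frobSq; positivity

lemma fip_self (M : Matrix m n ℝ) : fip M M = frobSq M := by
  simp [fip, frobSq, sq]

lemma frobSq_eq_trace (M : Matrix m n ℝ) : frobSq M = (Mᵀ * M).trace := by
  simp only [frobSq, Matrix.trace, Matrix.diag, Matrix.mul_apply, Matrix.transpose_apply, sq]
  exact Finset.sum_comm

lemma fip_eq_trace (M N : Matrix m n ℝ) : fip M N = (Mᵀ * N).trace := by
  simp only [fip, Matrix.trace, Matrix.diag, Matrix.mul_apply, Matrix.transpose_apply]
  exact Finset.sum_comm

lemma fip_mul_left (P : Matrix m p ℝ) (Q : Matrix p n ℝ) (R : Matrix m n ℝ) :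
    fip (P * Q) R = fip Q (Pᵀ * R) := by
  rw [fip_eq_trace, fip_eq_trace, Matrix.transpose_mul, Matrix.mul_assoc]

lemma fip_sub_right (M P Q : Matrix m n ℝ) : fip M (P - Q) = fip M P - fip M Q := by
  simp only [fip, Matrix.sub_apply, mul_sub, Finset.sum_sub_distrib]

lemma fip_zero_right (M : Matrix m n ℝ) : fip M (0 : Matrix m n ℝ) = 0 := by
  simp [fip]

lemma frobSq_neg (M : Matrix m n ℝ) : frobSq (-M) = frobSq M := by
  simp [frobSq]

lemma frobSq_sub_smul (R M : Matrix m n ℝ) (t : ℝ) :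
    frobSq (R - t • M) = frobSq R - 2*t*fip M R + t^2 * frobSq M := by
  simp only [frobSq, fip, Matrix.sub_apply, Matrix.smul_apply, smul_eq_mul]
  have h : ∀ i j, (R i j - t * M i j)^2
      = R i j ^ 2 - 2*t*(M i j * R i j) + t^2 * M i j ^ 2 := by intros; ring
  simp_rw [h, Finset.sum_add_distrib, Finset.sum_sub_distrib, ← Finset.mul_sum]

lemma frobSq_eq_zero {M : Matrix m n ℝ} (h : frobSq M = 0) : M = 0 := by
  have h0 : ∀ i ∈ (Finset.univ : Finset m), ∑ j, (M i j)^2 = 0 := by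
    intro i _
    have := (Finset.sum_eq_zero_iff_of_nonneg (fun i _ => by positivity)).mp h
    exact this i (Finset.mem_univ i)
  ext i j
  have := (Finset.sum_eq_zero_iff_of_nonneg (fun j _ => by positivity)).mp
    (h0 i (Finset.mem_univ i)) j (Finset.mem_univ j)
  simpa using pow_eq_zero_iff (n := 2) (by norm_num) |>.mp this

lemma fip_sq_le (M N : Matrix m n ℝ) : (fip M N)^2 ≤ frobSq M * frobSq N := by
  have h1 : fip M N = ∑ x : m × n, M x.1 x.2 * N x.1 x.2 := by
    rw [fip, Fintype.sum_prod_type]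
  have h2 : frobSq M = ∑ x : m × n, (M x.1 x.2)^2 := by
    rw [frobSq, Fintype.sum_prod_type]
  have h3 : frobSq N = ∑ x : m × n, (N x.1 x.2)^2 := by
    rw [frobSq, Fintype.sum_prod_type]
  rw [h1, h2, h3]
  exact Finset.sum_mul_sq_le_sq_mul_sq _ _ _

lemma normal_equation (A : Matrix m p ℝ) (B : Matrix m n ℝ) (X0 : Matrix p n ℝ)
    (h : ∀ X, frobSq (A * X0 - B) ≤ frobSq (A * X - B)) : Aᵀ * (A * X0 - B) = 0 := by
  set R := A * X0 - B with hR
  set G := Aᵀ * R with hG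
  have key : ∀ t : ℝ, 0 ≤ t^2 * frobSq (A*G) - 2*t*frobSq G := by
    intro t
    have h1 : frobSq R ≤ frobSq (A * (X0 - t • G) - B) := h (X0 - t • G)
    have h2 : A * (X0 - t • G) - B = R - t • (A * G) := by
      rw [Matrix.mul_sub, Matrix.mul_smul, hR, sub_right_comm]
    rw [h2, frobSq_sub_smul] at h1
    have h3 : fip (A*G) R = frobSq G := by rw [fip_mul_left, ← hG, fip_self]
    rw [h3] at h1; linarith
  have hc := frobSq_nonneg G
  have hd := frobSq_nonneg (A*G)
  set c := frobSq G
  set d := frobSq (A*G)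
  have hd1 : (0:ℝ) < d + 1 := by linarith
  set t0 := c / (d+1) with ht0
  have ht : t0 * (d+1) = c := div_mul_cancel₀ c hd1.ne'
  have h0 := key t0
  have h2 : t0^2 ≤ 0 := by nlinarith
  have h3 : t0 = 0 := by
    have := le_antisymm h2 (sq_nonneg t0)
    exact pow_eq_zero_iff (n := 2) (by norm_num) |>.mp this
  have hczero : c = 0 := by rw [← ht, h3, zero_mul]
  exact frobSq_eq_zero hczero

lemma sigmaMinSq_nonneg (M : Matrix m n ℝ) : 0 ≤ sigmaMinSq M := by
  apply Real.sInf_nonneg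
  rintro x ⟨y, -, rfl⟩
  positivity

lemma sigmaMinSq_le (M : Matrix m n ℝ) (x : n → ℝ) :
    sigmaMinSq M * (∑ i, x i ^ 2) ≤ ∑ j, (M.mulVec x j)^2 := by
  by_cases hx : ∑ i, x i ^2 = 0
  · rw [hx, mul_zero]; positivity
  · have hpos : 0 < ∑ i, x i^2 := lt_of_le_of_ne (by positivity) (Ne.symm hx)
    set c := ∑ i, x i ^2 with hcdef
    set u := fun i => x i / Real.sqrt c with hu
    have hsq : Real.sqrt c ^ 2 = c := Real.sq_sqrt hpos.le
    have hu1 : ∑ i, u i ^ 2 = 1 := by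
      simp_rw [hu, div_pow, hsq, ← Finset.sum_div]
      exact div_self hpos.ne'
    have hmv : ∀ j, M.mulVec u j = M.mulVec x j / Real.sqrt c := by
      intro j
      simp only [Matrix.mulVec, dotProduct, hu, div_eq_mul_inv, ← mul_assoc]
      rw [← Finset.sum_mul]
    have hbdd : BddBelow {c : ℝ | ∃ x : n → ℝ, ∑ i, (x i) ^ 2 = 1 ∧ c = ∑ j, (M.mulVec x j) ^ 2} := by
      refine ⟨0, ?_⟩
      rintro y ⟨z, -, rfl⟩
      positivity
    have h1 : sigmaMinSq M ≤ ∑ j, (M.mulVec u j)^2 :=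
      csInf_le hbdd ⟨u, hu1, rfl⟩
    have h2 : ∑ j, (M.mulVec u j)^2 = (∑ j, (M.mulVec x j)^2) / c := by
      simp_rw [hmv, div_pow, hsq, ← Finset.sum_div]
    rw [h2] at h1
    exact (le_div_iff₀ hpos).mp h1

lemma sigmaMinSq_mul_frobSq_le (M : Matrix m p ℝ) (Z : Matrix p n ℝ) :
    sigmaMinSq M * frobSq Z ≤ frobSq (M * Z) := by
  have h1 : frobSq Z = ∑ j : n, ∑ k : p, (Z k j)^2 := Finset.sum_comm
  have h2 : frobSq (M * Z) = ∑ j : n, ∑ i : m, ((M * Z) i j)^2 := Finset.sum_comm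
  rw [h1, h2, Finset.mul_sum]
  refine Finset.sum_le_sum fun j _ => ?_
  have h := sigmaMinSq_le M (fun k => Z k j)
  simp only [Matrix.mul_apply, Matrix.mulVec, dotProduct] at h ⊢
  exact h

end Aux

lemma sigmaMinSq_pos {N r : ℕ} (hr : 0 < r) (A : Matrix (Fin N) (Fin r) ℝ)
    (hA : A.rank = r) : 0 < sigmaMinSq A := by
  -- injectivity of mulVec
  have hker : LinearMap.ker A.mulVecLin = ⊥ := by
    have h1 := LinearMap.finrank_range_add_finrank_ker A.mulVecLin
    have h2 : Module.finrank ℝ (Fin r → ℝ) = r := by simp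
    rw [h2] at h1
    have h3 : Module.finrank ℝ (LinearMap.range A.mulVecLin) = r := hA
    rw [h3] at h1
    have : Module.finrank ℝ (LinearMap.ker A.mulVecLin) = 0 := by omega
    exact Submodule.finrank_eq_zero.mp this
  -- the sphere
  set Sph : Set (Fin r → ℝ) := {x | ∑ i, x i ^ 2 = 1} with hSph
  have hcont : Continuous (fun x : Fin r → ℝ => ∑ i, x i ^ 2) := by
    exact continuous_finset_sum _ fun i _ => (continuous_apply i).pow 2
  have hclosed : IsClosed Sph := isClosed_eq hcont continuous_const
  have hsub : Sph ⊆ Metric.closedBall 0 1 := by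
    intro x hx
    rw [Metric.mem_closedBall, dist_zero_right]
    rw [pi_norm_le_iff_of_nonneg zero_le_one]
    intro i
    have h1 : x i ^ 2 ≤ 1 := by
      rw [← hx]
      exact Finset.single_le_sum (fun j _ => sq_nonneg (x j)) (Finset.mem_univ i)
    simpa using (sq_le_one_iff_abs_le_one (x i)).mp h1
  have hcomp : IsCompact Sph :=
    (isCompact_closedBall (0 : Fin r → ℝ) 1).of_isClosed_subset hclosed hsub
  have hfc : Continuous (fun x : Fin r → ℝ => ∑ j, (A.mulVec x j) ^ 2) := by
    refine continuous_finset_sum _ fun j _ => ?_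
    refine Continuous.pow ?_ 2
    simp only [Matrix.mulVec, dotProduct]
    exact continuous_finset_sum _ fun k _ => continuous_const.mul (continuous_apply k)
  set T := {c : ℝ | ∃ x : Fin r → ℝ, ∑ i, (x i) ^ 2 = 1 ∧ c = ∑ j, (A.mulVec x j) ^ 2} with hT
  have hTimg : T = (fun x : Fin r → ℝ => ∑ j, (A.mulVec x j) ^ 2) '' Sph := by
    ext c
    constructor
    · rintro ⟨x, h1, h2⟩; exact ⟨x, h1, h2.symm⟩
    · rintro ⟨x, h1, h2⟩; exact ⟨x, h1, h2.symm⟩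
  have hTc : IsCompact T := hTimg ▸ hcomp.image hfc
  have hTne : T.Nonempty := by
    refine ⟨∑ j, (A.mulVec (Pi.single ⟨0, hr⟩ 1) j) ^ 2, Pi.single ⟨0, hr⟩ 1, ?_, rfl⟩
    rw [Finset.sum_eq_single ⟨0, hr⟩]
    · simp
    · intro b _ hb; simp [Pi.single_apply, hb]
    · simp
  have hmem : sInf T ∈ T := hTc.sInf_mem hTne
  obtain ⟨x, hx1, hx2⟩ := hmem
  have hxne : x ≠ 0 := by
    intro h; rw [h] at hx1; simp at hx1
  have hAx : A.mulVec x ≠ 0 := by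
    intro h
    apply hxne
    have : x ∈ LinearMap.ker A.mulVecLin := by
      rw [LinearMap.mem_ker, Matrix.mulVecLin_apply, h]
    rw [hker] at this
    simpa using this
  have : 0 < ∑ j, (A.mulVec x j) ^ 2 := by
    obtain ⟨j, hj⟩ := Function.ne_iff.mp hAx
    refine Finset.sum_pos' (fun k _ => sq_nonneg _) ⟨j, Finset.mem_univ j, ?_⟩
    have : A.mulVec x j ≠ 0 := by simpa using hj
    positivity
  rw [sigmaMinSq, ← hT, ← hx2] at *
  exact hx2 ▸ this

lemma arith_aux (a t e : ℝ) (ha : 0 ≤ a) (h1 : a^2/2 ≤ t^2) (h2 : t^2 ≤ a*(e/2))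
    (he : 0 ≤ e) : a ≤ e := by
  rcases eq_or_lt_of_le ha with h | h
  · rw [← h]; exact he
  · nlinarith

/-- Theorem 3.1, solution bound under the structural conditions.
If `S` satisfies (SC1) and (SC2) for some `ε ∈ (0,1)`, then any solution `X̃_opt` of
the sketched problem satisfies `‖X_opt − X̃_opt‖_F² ≤ ε ‖A X_opt − B‖_F² / σ_min²(A)`. -/
theorem sketched_solution_bound {N r n s : ℕ} (hNr : r < N)
    (A : Matrix (Fin N) (Fin r) ℝ) (hA : A.rank = r)
    (B : Matrix (Fin N) (Fin n) ℝ)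
    (U : Matrix (Fin N) (Fin r) ℝ) (hU : Uᵀ * U = 1)
    (hrange : LinearMap.range A.mulVecLin = LinearMap.range U.mulVecLin)
    (Xopt : Matrix (Fin r) (Fin n) ℝ)
    (hXopt : ∀ X : Matrix (Fin r) (Fin n) ℝ, frobSq (A * Xopt - B) ≤ frobSq (A * X - B))
    (Rsq : ℝ) (hRsq : Rsq = frobSq (A * Xopt - B))
    (Bperp : Matrix (Fin N) (Fin n) ℝ) (hBperp : Bperp = B - U * (Uᵀ * B))
    (ε : ℝ) (hε : ε ∈ Set.Ioo (0 : ℝ) 1)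
    (S : Matrix (Fin s) (Fin N) ℝ)
    (hSC1 : sigmaMinSq (S * U) ≥ 1 / Real.sqrt 2)
    (hSC2 : frobSq (Uᵀ * Sᵀ * (S * Bperp)) ≤ ε * Rsq / 2)
    (Xtopt : Matrix (Fin r) (Fin n) ℝ)
    (hXtopt : ∀ X : Matrix (Fin r) (Fin n) ℝ,
      frobSq (S * A * Xtopt - S * B) ≤ frobSq (S * A * X - S * B)) :
    frobSq (Xopt - Xtopt) ≤ ε * frobSq (A * Xopt - B) / sigmaMinSq A := by
  obtain ⟨hε0, hε1⟩ := hε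
  have hRsq0 : 0 ≤ Rsq := hRsq ▸ frobSq_nonneg _
  by_cases hr0 : r = 0
  · have hL : frobSq (Xopt - Xtopt) = 0 := by
      subst hr0; simp [frobSq]
    rw [hL]
    have h1 := frobSq_nonneg (A * Xopt - B)
    have h2 : 0 ≤ sigmaMinSq A := by
      apply Real.sInf_nonneg
      rintro x ⟨y, -, rfl⟩
      positivity
    exact div_nonneg (mul_nonneg hε0.le h1) h2
  have hrpos : 0 < r := Nat.pos_of_ne_zero hr0
  -- normal equations
  have hNE1 : Aᵀ * (A * Xopt - B) = 0 := normal_equation A B Xopt hXopt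
  have hNE2 : (S*A)ᵀ * ((S*A) * Xtopt - S*B) = 0 := normal_equation (S*A) (S*B) Xtopt hXtopt
  -- U = A * W
  have hW : ∃ W : Matrix (Fin r) (Fin r) ℝ, A * W = U := by
    have hmem : ∀ j : Fin r, ∃ w : Fin r → ℝ, A.mulVec w = fun i => U i j := by
      intro j
      have h1 : (fun i => U i j) ∈ LinearMap.range U.mulVecLin := by
        refine ⟨Pi.single j 1, ?_⟩
        rw [Matrix.mulVecLin_apply, Matrix.mulVec_single]
        simp
        rfl
      rw [← hrange] at h1
      obtain ⟨w, hw⟩ := h1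
      exact ⟨w, by rw [← Matrix.mulVecLin_apply]; exact hw⟩
    choose w hw using hmem
    refine ⟨Matrix.of (fun k j => w j k), ?_⟩
    ext i j
    have := congrFun (hw j) i
    simpa [Matrix.mul_apply, Matrix.mulVec, dotProduct] using this
  obtain ⟨W, hAW⟩ := hW
  -- U * Uᵀ * A = A
  have hUUA : U * (Uᵀ * A) = A := by
    have hmem : ∀ j : Fin r, ∃ y : Fin r → ℝ, U.mulVec y = fun i => A i j := by
      intro j
      have h1 : (fun i => A i j) ∈ LinearMap.range A.mulVecLin := by
        refine ⟨Pi.single j 1, ?_⟩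
        rw [Matrix.mulVecLin_apply, Matrix.mulVec_single]
        simp
        rfl
      rw [hrange] at h1
      obtain ⟨y, hy⟩ := h1
      exact ⟨y, by rw [← Matrix.mulVecLin_apply]; exact hy⟩
    choose y hy using hmem
    set Y : Matrix (Fin r) (Fin r) ℝ := Matrix.of (fun k j => y j k) with hYdef
    have hUY : U * Y = A := by
      ext i j
      have := congrFun (hy j) i
      simpa [Matrix.mul_apply, Matrix.mulVec, dotProduct, hYdef] using this
    calc U * (Uᵀ * A) = U * (Uᵀ * (U * Y)) := by rw [hUY]
      _ = U * ((Uᵀ * U) * Y) := by rw [Matrix.mul_assoc]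
      _ = U * Y := by rw [hU, Matrix.one_mul]
      _ = A := hUY
  -- residual is -Bperp
  have hres : A * Xopt - B = -Bperp := by
    have h1 : Uᵀ * (A * Xopt - B) = 0 := by
      rw [← hAW, Matrix.transpose_mul, Matrix.mul_assoc, hNE1, Matrix.mul_zero]
    rw [Matrix.mul_sub] at h1
    have h2 : Uᵀ * (A * Xopt) = Uᵀ * B := sub_eq_zero.mp h1
    have h3 : U * (Uᵀ * B) = A * Xopt := by
      rw [← h2, ← Matrix.mul_assoc, ← Matrix.mul_assoc, Matrix.mul_assoc U Uᵀ A, hUUA]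
    rw [hBperp, h3, neg_sub]
  set D := Xtopt - Xopt with hD
  set Z := Uᵀ * (A * D) with hZ
  have hAD : A * D = U * Z := by
    rw [hZ]
    calc A * D = (U * (Uᵀ * A)) * D := by rw [hUUA]
      _ = U * (Uᵀ * (A * D)) := by rw [Matrix.mul_assoc, Matrix.mul_assoc]
  have hsk : A * Xtopt - B = U * Z - Bperp := by
    have h1 : A * Xtopt - B = A * D + (A * Xopt - B) := by
      rw [hD, Matrix.mul_sub]; abel
    rw [h1, hres, hAD, ← sub_eq_add_neg]
  set C := Uᵀ * Sᵀ * (S * Bperp) with hC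
  have hkey : frobSq (S * (U * Z)) = fip Z C := by
    have e1 : (S*A)*Xtopt - S*B = S*(U*Z) - S*Bperp := by
      rw [Matrix.mul_assoc, ← Matrix.mul_sub, hsk, Matrix.mul_sub]
    have e2 : fip ((S*A)*D) ((S*A)*Xtopt - S*B) = 0 := by
      rw [fip_mul_left, hNE2, fip_zero_right]
    have e3 : (S*A)*D = S*(U*Z) := by rw [Matrix.mul_assoc, hAD]
    rw [e3, e1, fip_sub_right, fip_self] at e2
    have e4 : fip (S*(U*Z)) (S*Bperp) = fip Z C := by
      rw [fip_mul_left, fip_mul_left, hC, Matrix.mul_assoc]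
    linarith
  -- SC1 lower bound
  have hlow : (1/Real.sqrt 2) * frobSq Z ≤ frobSq (S*(U*Z)) := by
    have h1 := sigmaMinSq_mul_frobSq_le (S*U) Z
    rw [Matrix.mul_assoc] at h1
    calc (1/Real.sqrt 2) * frobSq Z ≤ sigmaMinSq (S*U) * frobSq Z :=
          mul_le_mul_of_nonneg_right hSC1 (frobSq_nonneg Z)
      _ ≤ frobSq (S*(U*Z)) := h1
  have hC2 : frobSq C ≤ ε * Rsq / 2 := hSC2
  have h1 : (frobSq Z)^2/2 ≤ (frobSq (S*(U*Z)))^2 := by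
    have hs2 : Real.sqrt 2 ^ 2 = 2 := Real.sq_sqrt (by norm_num)
    have hnn : 0 ≤ (1/Real.sqrt 2) * frobSq Z :=
      mul_nonneg (by positivity) (frobSq_nonneg Z)
    have h := pow_le_pow_left₀ hnn hlow 2
    calc (frobSq Z)^2/2 = ((1/Real.sqrt 2) * frobSq Z)^2 := by
          rw [mul_pow, div_pow, one_pow, hs2]; ring
      _ ≤ _ := h
  have h2 : (frobSq (S*(U*Z)))^2 ≤ frobSq Z * (ε * Rsq / 2) := by
    rw [hkey]
    exact le_trans (fip_sq_le Z C) (mul_le_mul_of_nonneg_left hC2 (frobSq_nonneg Z))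
  have hZbound : frobSq Z ≤ ε * Rsq :=
    arith_aux _ _ _ (frobSq_nonneg Z) h1 h2 (mul_nonneg hε0.le hRsq0)
  -- finish
  have hfin1 : sigmaMinSq A * frobSq D ≤ frobSq (A * D) := sigmaMinSq_mul_frobSq_le A D
  have hUZ : frobSq (U * Z) = frobSq Z := by
    rw [frobSq_eq_trace, frobSq_eq_trace (M := Z), Matrix.transpose_mul, Matrix.mul_assoc,
      ← Matrix.mul_assoc Uᵀ U Z, hU, Matrix.one_mul]
  have hspos : 0 < sigmaMinSq A := sigmaMinSq_pos hrpos A hA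
  have hDeq : frobSq (Xopt - Xtopt) = frobSq D := by
    rw [hD, ← frobSq_neg (Xopt - Xtopt), neg_sub]
  rw [hDeq, ← hRsq]
  rw [le_div_iff₀ hspos]
  have : frobSq (A * D) ≤ ε * Rsq := by rw [hAD, hUZ]; exact hZbound
  calc frobSq D * sigmaMinSq A = sigmaMinSq A * frobSq D := by ring
    _ ≤ frobSq (A * D) := hfin1
    _ ≤ ε * Rsq := this
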